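/- Let T > 0 and let w : ℕ₀^m → (ℝ → ℝ) be a family of differentiable, nonnegative functions on (0,T) solving the reduced multicomponent Smoluchowski equation, with ∑_{n} |n| w_n(t) < ∞ for each t. For t ∈ (0,T) and x ∈ (0,∞)^m set u(t,x) = ∑_{n∈ℕ₀^m} n w_n(t) e^{−n·x} ∈ ℝ^m. Assume the series for u converges absolutely and that termwise differentiation is valid, i.e. ∂u/∂t (t,x) = ∑_n n (d/dt w_n(t)) e^{−n·x} and the spatial Jacobian satisfies ∇u(t,x) = −∑_n n nᵀ w_n(t) e^{−n·x}, both series converging absolutely. Then u satisfies the inviscid-Burgers-type PDE ∂u/∂t (t,x) = −(∇u(t,x)) A (u(t,x) − m(0)) for all (t,x) ∈ (0,T) × (0,∞)^m. -/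

import Mathlib

open Finset

local instance instAnti (m : ℕ) : Finset.HasAntidiagonal (Fin m → ℕ) :=
  Finset.HasAntidiagonal.antidiagonalOfLocallyFinite

lemma helper_tsum_antidiag {m : ℕ} (h : ((Fin m → ℕ) × (Fin m → ℕ)) → ℝ)
    (hsum : Summable h) :
    ∑' n : Fin m → ℕ, ∑ kl ∈ Finset.HasAntidiagonal.antidiagonal n, h kl = ∑' kl, h kl := by
  conv_lhs => congr; ext n; rw [← Finset.sum_finset_coe, ← tsum_fintype (L := SummationFilter.unconditional _)]
  rw [← Finset.HasAntidiagonal.sigmaAntidiagonalEquivProd.tsum_eq h]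
  exact (Summable.tsum_sigma' (fun n => (hasSum_fintype _).summable)
    (Finset.HasAntidiagonal.sigmaAntidiagonalEquivProd.summable_iff.mpr hsum)).symm

lemma helper_Iic_antidiag {m : ℕ} (n : Fin m → ℕ)
    (F : (Fin m → ℕ) → (Fin m → ℕ) → ℝ) :
    ∑ k ∈ Finset.Iic n, F k (n - k) = ∑ kl ∈ Finset.HasAntidiagonal.antidiagonal n, F kl.1 kl.2 := by
  refine Finset.sum_nbij' (fun k => (k, n - k)) (fun kl => kl.1) ?_ ?_ ?_ ?_ ?_
  · intro k hk
    rw [Finset.HasAntidiagonal.mem_antidiagonal]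
    exact add_tsub_cancel_of_le (Finset.mem_Iic.mp hk)
  · intro kl hkl
    rw [Finset.HasAntidiagonal.mem_antidiagonal] at hkl
    exact Finset.mem_Iic.mpr (le_of_add_le_left hkl.le)
  · intro k _; rfl
  · intro kl hkl
    rw [Finset.HasAntidiagonal.mem_antidiagonal] at hkl
    have : kl.2 = n - kl.1 := eq_tsub_of_add_eq (by rw [add_comm]; exact hkl)
    exact Prod.ext rfl this.symm
  · intro k _; rfl

set_option maxHeartbeats 2000000 in
/-- If `w` solves the reduced multicomponent Smoluchowski equation on `(0,T)`
and the generating-function transform `u(t,x) = ∑ₙ n wₙ(t) e^{-n·x}` may be differentiated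
termwise (in `t` and in `x`, with absolutely convergent series), then `u` solves the
inviscid-Burgers-type PDE `∂u/∂t = -(∇u) A (u - m(0))` on `(0,T) × (0,∞)^m`. -/
theorem gf_transform_solves_burgers
    (m : ℕ) (hm : 1 ≤ m)
    (A : Matrix (Fin m) (Fin m) ℝ) (hAsymm : A.IsSymm) (hA0 : ∀ i j, 0 ≤ A i j)
    (T : ℝ) (hT : 0 < T) (m₀ : Fin m → ℝ)
    (w w' : (Fin m → ℕ) → ℝ → ℝ)
    (hderiv : ∀ n : Fin m → ℕ, ∀ t ∈ Set.Ioo (0:ℝ) T, HasDerivAt (w n) (w' n t) t)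
    (hwpos : ∀ n : Fin m → ℕ, ∀ t ∈ Set.Ioo (0:ℝ) T, 0 ≤ w n t)
    (hmoment : ∀ t ∈ Set.Ioo (0:ℝ) T,
      Summable (fun n : Fin m → ℕ => (∑ i, (n i : ℝ)) * w n t))
    -- `w` solves the reduced multicomponent Smoluchowski equation on (0,T)
    (hreduced : ∀ n : Fin m → ℕ, ∀ t ∈ Set.Ioo (0:ℝ) T,
      w' n t =
        (1/2) * ∑ k ∈ Finset.Iic n,
            (∑ i, ∑ j, (k i : ℝ) * A i j * ((n - k) j : ℝ)) * w k t * w (n - k) t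
          - (∑ i, ∑ j, (n i : ℝ) * A i j * m₀ j) * w n t)
    -- absolute convergence of the series for u, its time derivative and its Jacobian
    (habs : ∀ t ∈ Set.Ioo (0:ℝ) T, ∀ x : Fin m → ℝ, (∀ i, 0 < x i) → ∀ i : Fin m,
      Summable (fun n : Fin m → ℕ =>
        |(n i : ℝ) * w n t * Real.exp (-∑ r, (n r : ℝ) * x r)|))
    (habs' : ∀ t ∈ Set.Ioo (0:ℝ) T, ∀ x : Fin m → ℝ, (∀ i, 0 < x i) → ∀ i : Fin m,
      Summable (fun n : Fin m → ℕ =>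
        |(n i : ℝ) * w' n t * Real.exp (-∑ r, (n r : ℝ) * x r)|))
    (habs'' : ∀ t ∈ Set.Ioo (0:ℝ) T, ∀ x : Fin m → ℝ, (∀ i, 0 < x i) → ∀ i j : Fin m,
      Summable (fun n : Fin m → ℕ =>
        |(n i : ℝ) * (n j : ℝ) * w n t * Real.exp (-∑ r, (n r : ℝ) * x r)|))
    -- termwise differentiation in time is valid
    (hut : ∀ t ∈ Set.Ioo (0:ℝ) T, ∀ x : Fin m → ℝ, (∀ i, 0 < x i) → ∀ i : Fin m,
      HasDerivAt
        (fun s => ∑' n : Fin m → ℕ, (n i : ℝ) * w n s * Real.exp (-∑ r, (n r : ℝ) * x r))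
        (∑' n : Fin m → ℕ, (n i : ℝ) * w' n t * Real.exp (-∑ r, (n r : ℝ) * x r)) t)
    -- the spatial Jacobian is given by the termwise-differentiated series
    (hux : ∀ t ∈ Set.Ioo (0:ℝ) T, ∀ x : Fin m → ℝ, (∀ i, 0 < x i) → ∀ i j : Fin m,
      HasDerivAt
        (fun s => ∑' n : Fin m → ℕ, (n i : ℝ) * w n t *
          Real.exp (-∑ r, (n r : ℝ) * Function.update x j s r))
        (-∑' n : Fin m → ℕ,
          (n i : ℝ) * (n j : ℝ) * w n t * Real.exp (-∑ r, (n r : ℝ) * x r)) (x j)) :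
    -- conclusion: ∂u/∂t = -(∇u) A (u - m₀)
    ∀ t ∈ Set.Ioo (0:ℝ) T, ∀ x : Fin m → ℝ, (∀ i, 0 < x i) → ∀ i : Fin m,
      HasDerivAt
        (fun s => ∑' n : Fin m → ℕ, (n i : ℝ) * w n s * Real.exp (-∑ r, (n r : ℝ) * x r))
        (-∑ j, (-∑' n : Fin m → ℕ,
            (n i : ℝ) * (n j : ℝ) * w n t * Real.exp (-∑ r, (n r : ℝ) * x r)) *
          (∑ k, A j k *
            ((∑' n : Fin m → ℕ, (n k : ℝ) * w n t * Real.exp (-∑ r, (n r : ℝ) * x r))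
              - m₀ k))) t := by
  intro t ht x hx i
  set E : (Fin m → ℕ) → ℝ := fun n => Real.exp (-∑ r, (n r : ℝ) * x r) with hE
  -- basic facts about E
  have hEpos : ∀ n, 0 < E n := fun n => Real.exp_pos _
  have hEadd : ∀ k l : Fin m → ℕ, E (k + l) = E k * E l := by
    intro k l
    rw [hE]
    simp only
    rw [← Real.exp_add]
    congr 1
    simp only [Pi.add_apply, Nat.cast_add, add_mul, Finset.sum_add_distrib]
    ring
  -- summability of the basic series
  have hsf : ∀ a : Fin m, Summable (fun n : Fin m → ℕ => (n a : ℝ) * w n t * E n) :=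
    fun a => summable_abs_iff.mp (habs t ht x hx a)
  have hsg : ∀ a : Fin m,
      Summable (fun n : Fin m → ℕ => (n i : ℝ) * (n a : ℝ) * w n t * E n) :=
    fun a => summable_abs_iff.mp (habs'' t ht x hx i a)
  have hsf' : Summable (fun n : Fin m → ℕ => (n i : ℝ) * w' n t * E n) :=
    summable_abs_iff.mp (habs' t ht x hx i)
  -- nonnegativity
  have hfnn : ∀ a : Fin m, ∀ n : Fin m → ℕ, 0 ≤ (n a : ℝ) * w n t * E n := fun a n =>
    mul_nonneg (mul_nonneg (Nat.cast_nonneg _) (hwpos n t ht)) (hEpos n).le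
  have hgnn : ∀ a : Fin m, ∀ n : Fin m → ℕ, 0 ≤ (n i : ℝ) * (n a : ℝ) * w n t * E n :=
    fun a n => mul_nonneg (mul_nonneg (mul_nonneg (Nat.cast_nonneg _)
      (Nat.cast_nonneg _)) (hwpos n t ht)) (hEpos n).le
  -- product summabilities
  have hprod1 : ∀ a b : Fin m, Summable (fun kl : (Fin m → ℕ) × (Fin m → ℕ) =>
      ((kl.1 i : ℝ) * (kl.1 a : ℝ) * w kl.1 t * E kl.1) *
        ((kl.2 b : ℝ) * w kl.2 t * E kl.2)) := fun a b =>
    (hsg a).mul_of_nonneg (hsf b) (fun n => hgnn a n) (fun n => hfnn b n)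
  have hprod2 : ∀ a b : Fin m, Summable (fun kl : (Fin m → ℕ) × (Fin m → ℕ) =>
      ((kl.1 a : ℝ) * w kl.1 t * E kl.1) *
        ((kl.2 i : ℝ) * (kl.2 b : ℝ) * w kl.2 t * E kl.2)) := fun a b =>
    (hsf a).mul_of_nonneg (hsg b) (fun n => hfnn a n) (fun n => hgnn b n)
  -- the convolution kernel
  set H : ((Fin m → ℕ) × (Fin m → ℕ)) → ℝ := fun kl =>
    ∑ a, ∑ b, A a b *
      ((1/2) * (((kl.1 i : ℝ) * (kl.1 a : ℝ) * w kl.1 t * E kl.1) *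
          ((kl.2 b : ℝ) * w kl.2 t * E kl.2))
        + (1/2) * (((kl.1 a : ℝ) * w kl.1 t * E kl.1) *
          ((kl.2 i : ℝ) * (kl.2 b : ℝ) * w kl.2 t * E kl.2))) with hH
  have hHsum : Summable H := by
    rw [hH]
    refine summable_sum fun a _ => summable_sum fun b _ => ?_
    exact (((hprod1 a b).mul_left _).add ((hprod2 a b).mul_left _)).mul_left _
  -- termwise identity from the reduced Smoluchowski equation
  have hterm : ∀ n : Fin m → ℕ, (n i : ℝ) * w' n t * E n
      = (∑ kl ∈ Finset.HasAntidiagonal.antidiagonal n, H kl)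
        - ∑ a, ∑ b, A a b * m₀ b * ((n i : ℝ) * (n a : ℝ) * w n t * E n) := by
    intro n
    rw [hreduced n t ht]
    rw [helper_Iic_antidiag n
      (fun k l => (∑ a, ∑ b, (k a : ℝ) * A a b * (l b : ℝ)) * w k t * w l t)]
    have sub1 : (n i : ℝ) *
        ((1/2) * ∑ kl ∈ Finset.HasAntidiagonal.antidiagonal n,
          (∑ a, ∑ b, (kl.1 a : ℝ) * A a b * (kl.2 b : ℝ)) * w kl.1 t * w kl.2 t) * E n
        = ∑ kl ∈ Finset.HasAntidiagonal.antidiagonal n, H kl := by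
      rw [Finset.mul_sum, Finset.mul_sum, Finset.sum_mul]
      refine Finset.sum_congr rfl fun kl hkl => ?_
      have hn : kl.1 + kl.2 = n := Finset.HasAntidiagonal.mem_antidiagonal.mp hkl
      rw [← hn, hEadd]
      have hni : (((kl.1 + kl.2) : Fin m → ℕ) i : ℝ) = (kl.1 i : ℝ) + (kl.2 i : ℝ) := by
        simp [Pi.add_apply]
      rw [hni, hH]
      simp only [Finset.sum_mul, Finset.mul_sum]
      exact Finset.sum_congr rfl fun a _ => Finset.sum_congr rfl fun b _ => by ring
    have sub2 : (n i : ℝ) * ((∑ a, ∑ b, (n a : ℝ) * A a b * m₀ b) * w n t) * E n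
        = ∑ a, ∑ b, A a b * m₀ b * ((n i : ℝ) * (n a : ℝ) * w n t * E n) := by
      simp only [Finset.sum_mul, Finset.mul_sum]
      exact Finset.sum_congr rfl fun a _ => Finset.sum_congr rfl fun b _ => by ring
    calc (n i : ℝ) *
          ((1/2) * ∑ kl ∈ Finset.HasAntidiagonal.antidiagonal n,
            (∑ a, ∑ b, (kl.1 a : ℝ) * A a b * (kl.2 b : ℝ)) * w kl.1 t * w kl.2 t
            - (∑ a, ∑ b, (n a : ℝ) * A a b * m₀ b) * w n t) * E n
        = (n i : ℝ) *
            ((1/2) * ∑ kl ∈ Finset.HasAntidiagonal.antidiagonal n,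
              (∑ a, ∑ b, (kl.1 a : ℝ) * A a b * (kl.2 b : ℝ)) * w kl.1 t * w kl.2 t) * E n
          - (n i : ℝ) * ((∑ a, ∑ b, (n a : ℝ) * A a b * m₀ b) * w n t) * E n := by ring
      _ = _ := by rw [sub1, sub2]
  -- summability of the two pieces
  have hB : Summable (fun n : Fin m → ℕ =>
      ∑ a, ∑ b, A a b * m₀ b * ((n i : ℝ) * (n a : ℝ) * w n t * E n)) :=
    summable_sum fun a _ => summable_sum fun b _ => (hsg a).mul_left _
  have hA : Summable (fun n : Fin m → ℕ => ∑ kl ∈ Finset.HasAntidiagonal.antidiagonal n, H kl) := by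
    refine (hsf'.add hB).congr fun n => ?_
    rw [hterm n]; ring
  -- evaluate the convolution piece
  have hC : ∑' n : Fin m → ℕ, ∑ kl ∈ Finset.HasAntidiagonal.antidiagonal n, H kl
      = ∑ a, ∑ b, A a b *
          ((1/2) * ((∑' n : Fin m → ℕ, (n i : ℝ) * (n a : ℝ) * w n t * E n) *
              (∑' n : Fin m → ℕ, (n b : ℝ) * w n t * E n))
            + (1/2) * ((∑' n : Fin m → ℕ, (n a : ℝ) * w n t * E n) *
              (∑' n : Fin m → ℕ, (n i : ℝ) * (n b : ℝ) * w n t * E n))) := by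
    rw [helper_tsum_antidiag H hHsum, hH]
    beta_reduce
    erw [Summable.tsum_finsetSum fun a _ => summable_sum fun b _ =>
      ((((hprod1 a b).mul_left _).add ((hprod2 a b).mul_left _)).mul_left _)]
    refine Finset.sum_congr rfl fun a _ => ?_
    rw [Summable.tsum_finsetSum fun b _ =>
      ((((hprod1 a b).mul_left _).add ((hprod2 a b).mul_left _)).mul_left _)]
    refine Finset.sum_congr rfl fun b _ => ?_
    rw [tsum_mul_left, ((hprod1 a b).mul_left _).tsum_add ((hprod2 a b).mul_left _),
      tsum_mul_left, tsum_mul_left]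
    rw [← Summable.tsum_mul_tsum (hsg a) (hsf b) (hprod1 a b),
      ← Summable.tsum_mul_tsum (hsf a) (hsg b) (hprod2 a b)]
  -- evaluate the mass piece
  have hD : ∑' n : Fin m → ℕ,
        ∑ a, ∑ b, A a b * m₀ b * ((n i : ℝ) * (n a : ℝ) * w n t * E n)
      = ∑ a, ∑ b, A a b * m₀ b *
          (∑' n : Fin m → ℕ, (n i : ℝ) * (n a : ℝ) * w n t * E n) := by
    rw [Summable.tsum_finsetSum fun a _ => summable_sum fun b _ => (hsg a).mul_left _]
    refine Finset.sum_congr rfl fun a _ => ?_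
    rw [Summable.tsum_finsetSum fun b _ => (hsg a).mul_left _]
    exact Finset.sum_congr rfl fun b _ => tsum_mul_left
  -- the key identity
  have key : ∑' n : Fin m → ℕ, (n i : ℝ) * w' n t * E n
      = -∑ j, (-∑' n : Fin m → ℕ, (n i : ℝ) * (n j : ℝ) * w n t * E n) *
          (∑ k, A j k * ((∑' n : Fin m → ℕ, (n k : ℝ) * w n t * E n) - m₀ k)) := by
    rw [tsum_congr hterm, hA.tsum_sub hB, hC, hD]
    set S : Fin m → ℝ := fun a => ∑' n : Fin m → ℕ, (n i : ℝ) * (n a : ℝ) * w n t * E n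
      with hS
    set u : Fin m → ℝ := fun a => ∑' n : Fin m → ℕ, (n a : ℝ) * w n t * E n with hu
    have h1 : ∑ a, ∑ b, A a b * ((1/2) * (u a * S b))
        = ∑ a, ∑ b, A a b * ((1/2) * (S a * u b)) := by
      rw [Finset.sum_comm]
      exact Finset.sum_congr rfl fun a _ => Finset.sum_congr rfl fun b _ => by
        rw [hAsymm.apply a b]; ring
    calc (∑ a, ∑ b, A a b * ((1/2) * (S a * u b) + (1/2) * (u a * S b)))
          - ∑ a, ∑ b, A a b * m₀ b * S a
        = ((∑ a, ∑ b, A a b * ((1/2) * (S a * u b)))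
            + ∑ a, ∑ b, A a b * ((1/2) * (u a * S b)))
          - ∑ a, ∑ b, A a b * m₀ b * S a := by
          simp only [mul_add, Finset.sum_add_distrib]
      _ = ((∑ a, ∑ b, A a b * ((1/2) * (S a * u b)))
            + ∑ a, ∑ b, A a b * ((1/2) * (S a * u b)))
          - ∑ a, ∑ b, A a b * m₀ b * S a := by rw [h1]
      _ = ∑ a, ∑ b, (A a b * (S a * u b) - A a b * m₀ b * S a) := by
          rw [← Finset.sum_add_distrib, ← Finset.sum_sub_distrib]
          refine Finset.sum_congr rfl fun a _ => ?_
          rw [← Finset.sum_add_distrib, ← Finset.sum_sub_distrib]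
          exact Finset.sum_congr rfl fun b _ => by ring
      _ = -∑ j, (-S j) * (∑ k, A j k * (u k - m₀ k)) := by
          rw [← Finset.sum_neg_distrib]
          refine Finset.sum_congr rfl fun j _ => ?_
          rw [neg_mul, neg_neg, Finset.mul_sum]
          exact Finset.sum_congr rfl fun k _ => by ring
  rw [← key]
  exact hut t ht x hx i
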